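/- arXiv:1709.01714 — 4 statements merged into one kernel-verified Lean document; each statement's English description precedes it below -/
import Mathlib

section
/- Let G be a finite group. The matrix obtained from the character table of G (over ℂ) by removing the row corresponding to the trivial representation and the column corresponding to the conjugacy class of the identity element is nondegenerate (invertible). -/
open CategoryTheory

/-- The character table of a finite group `G`, with the row of the trivial
representation and the column of the identity conjugacy class removed, is invertible.
Here `χ` enumerates the irreducible complex characters (with `χ 0` the trivial one)
and `c` enumerates representatives of the conjugacy classes (with `c 0 = 1`). -/
theorem stmt0 (G : Type) [Group G] [Fintype G] (n : ℕ)
    (χ : Fin (n + 1) → G → ℂ) (c : Fin (n + 1) → G)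
    (hχirr : ∀ i, ∃ V : FDRep ℂ G, Simple V ∧ V.character = χ i)
    (hχinj : Function.Injective χ)
    (hχsurj : ∀ V : FDRep ℂ G, Simple V → ∃ i, V.character = χ i)
    (hχ0 : χ 0 = fun _ => 1)
    (hc0 : c 0 = 1)
    (hcinj : ∀ i j, IsConj (c i) (c j) → i = j)
    (hcsurj : ∀ g : G, ∃ i, IsConj g (c i)) :
    IsUnit (Matrix.of fun i j : Fin n => χ i.succ (c j.succ)) := by
  have hcard : (Fintype.card G : ℂ) ≠ 0 := by
    exact_mod_cast Nat.cast_ne_zero.mpr Fintype.card_ne_zero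
  letI : Invertible (Fintype.card G : ℂ) := invertibleOfNonzero hcard
  -- the chosen simple representations
  choose V hVsimple hVchar using hχirr
  -- orthogonality of characters
  classical
  letI : Fintype ↑(GrpCat.of G) := ‹Fintype G›
  letI : Invertible ((Fintype.card ↑(GrpCat.of G)) : ℂ) := invertibleOfNonzero hcard
  have horth : ∀ i j : Fin (n + 1),
      ∑ g : G, χ i g * χ j g⁻¹ = if i = j then (Fintype.card G : ℂ) else 0 := by
    intro i j
    haveI := hVsimple i
    haveI := hVsimple j
    have h := FDRep.char_orthonormal (k := ℂ) (G := G) (V i) (V j)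
    have hiff : Nonempty (V i ≅ V j) ↔ i = j := by
      constructor
      · rintro ⟨e⟩
        exact hχinj ((hVchar i) ▸ (hVchar j) ▸ FDRep.char_iso e)
      · rintro rfl; exact ⟨Iso.refl _⟩
    rw [hVchar i, hVchar j] at h
    have h' : ⅟(Fintype.card G : ℂ) • ∑ g : G, χ i g * χ j g⁻¹
        = if Nonempty (V i ≅ V j) then 1 else 0 := by
      rw [smul_eq_mul, invOf_eq_inv, ← Nat.card_eq_fintype_card]; exact h
    have := congrArg (fun x => (Fintype.card G : ℂ) * x) h'
    simp only [smul_eq_mul, ← mul_assoc, mul_invOf_self, one_mul] at this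
    rw [this]
    by_cases hij : i = j <;> simp [hij, hiff, hcard]
  -- characters are class functions
  have hclass : ∀ i : Fin (n + 1), ∀ g h : G, IsConj g h → χ i g = χ i h := by
    intro i g h hgh
    obtain ⟨u, hu⟩ := isConj_iff.mp hgh
    rw [← hVchar i, ← hu, FDRep.char_conj]
  rw [← Matrix.linearIndependent_rows_iff_isUnit]
  rw [Fintype.linearIndependent_iff]
  intro v hv
  have hv' : ∀ j : Fin n, ∑ i, v i * χ i.succ (c j.succ) = 0 := by
    intro j
    have := congrFun hv (j : Fin n)
    simpa using this
  -- the linear combination of characters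
  set φ : G → ℂ := fun g => ∑ i, v i * χ i.succ g with hφ
  -- sum over G of each nontrivial character is 0
  have hsumchar : ∀ i : Fin n, ∑ g : G, χ i.succ g = 0 := by
    intro i
    have := horth i.succ 0
    rw [if_neg (Fin.succ_ne_zero i)] at this
    simpa [hχ0] using this
  -- φ vanishes at nonidentity elements
  have hφne : ∀ g : G, g ≠ 1 → φ g = 0 := by
    intro g hg
    obtain ⟨j, hj⟩ := hcsurj g
    have hj0 : j ≠ 0 := by
      rintro rfl
      rw [hc0] at hj
      exact hg (isConj_one_left.mp hj)
    obtain ⟨j', rfl⟩ := Fin.exists_succ_eq.mpr hj0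
    have : φ g = φ (c j'.succ) := by
      simp only [hφ]
      refine Finset.sum_congr rfl fun i _ => ?_
      rw [hclass i.succ g (c j'.succ) hj]
    rw [this]
    exact hv' j'
  -- the total sum of φ is 0
  have hφsum : ∑ g : G, φ g = 0 := by
    rw [Finset.sum_comm]
    refine Finset.sum_eq_zero fun i _ => ?_
    rw [← Finset.mul_sum, hsumchar i, mul_zero]
  -- hence φ 1 = 0
  have hφ1 : φ 1 = 0 := by
    have h1 : (1 : G) ∈ Finset.univ := Finset.mem_univ _
    rw [← Finset.add_sum_erase _ _ h1] at hφsum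
    rw [Finset.sum_eq_zero (fun g hg => hφne g (Finset.ne_of_mem_erase hg))] at hφsum
    simpa using hφsum
  have hφall : ∀ g : G, φ g = 0 := by
    intro g
    by_cases hg : g = 1
    · rw [hg]; exact hφ1
    · exact hφne g hg
  -- conclude v = 0 using orthogonality
  intro k
  have key : ∑ g : G, φ g * χ k.succ g⁻¹ = v k * (Fintype.card G : ℂ) := by
    simp only [hφ, Finset.sum_mul]
    rw [Finset.sum_comm]
    have h1 : ∀ i : Fin n, ∑ g : G, v i * χ i.succ g * χ k.succ g⁻¹ =
        if i = k then v i * (Fintype.card G : ℂ) else 0 := by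
      intro i
      simp only [mul_assoc, ← Finset.mul_sum]
      rw [horth i.succ k.succ]
      by_cases hik : i = k
      · simp [hik]
      · rw [if_neg (fun h => hik (Fin.succ_inj.mp h)), if_neg hik, mul_zero]
    rw [Finset.sum_congr rfl fun i _ => h1 i]
    simp
  have : v k * (Fintype.card G : ℂ) = 0 := by
    rw [← key]
    exact Finset.sum_eq_zero fun g _ => by rw [hφall g, zero_mul]
  exact (mul_eq_zero.mp this).resolve_right hcard
end

section
/- Let G be a nontrivial finite subgroup of SL₂(ℂ) with standard character χ₀. Define, for each nontrivial irreducible character ρ and each element g ≠ 1 of G, the vector v_ρ ∈ ℂ^{G∖{1}} with entries v_ρ(g) = (1/√|G|)·√(χ₀(g) − 2)·ρ(g) (for a fixed choice of square root). Then for any two nontrivial irreducible characters ρ₁, ρ₂, the bilinear pairing Σ_{g≠1} v_{ρ₁}(g)·v_{ρ₂}(g⁻¹) equals ⟨χ₀·ρ₁, ρ₂⟩ − 2·δ_{ρ₁,ρ₂}. -/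
open CategoryTheory
open scoped Classical

open Polynomial Matrix in
private lemma myEvalCharpoly {d : ℕ} (M : Matrix (Fin d) (Fin d) ℂ) (x : ℂ) :
    M.charpoly.eval x = (x • (1 : Matrix (Fin d) (Fin d) ℂ) - M).det := by
  rw [Matrix.charpoly, ← Polynomial.coe_evalRingHom, RingHom.map_det]
  congr 1
  ext i j
  rcases eq_or_ne i j with h | h
  · subst h; simp [charmatrix_apply_eq, Matrix.one_apply]
  · simp [charmatrix_apply_ne _ _ _ h, Matrix.one_apply, h]

open Polynomial Matrix in
private lemma myRootPow {d n : ℕ} (M : Matrix (Fin d) (Fin d) ℂ) (hM : M ^ n = 1)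
    {r : ℂ} (hr : r ∈ M.charpoly.roots) : r ^ n = 1 := by
  have hdet : (r • (1 : Matrix (Fin d) (Fin d) ℂ) - M).det = 0 := by
    rw [← myEvalCharpoly]
    exact Polynomial.isRoot_of_mem_roots hr
  obtain ⟨v, hv0, hv⟩ := (Matrix.exists_mulVec_eq_zero_iff).2 hdet
  have hMv : M *ᵥ v = r • v := by
    rw [Matrix.sub_mulVec, sub_eq_zero] at hv
    rw [← hv, Matrix.smul_mulVec, Matrix.one_mulVec]
  have key : ∀ k : ℕ, (M ^ k) *ᵥ v = r ^ k • v := by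
    intro k
    induction k with
    | zero => simp
    | succ k ih =>
      rw [pow_succ', ← Matrix.mulVec_mulVec, ih, Matrix.mulVec_smul, hMv,
        smul_smul, ← pow_succ]
  have h1 : v = r ^ n • v := by rw [← key n, hM, Matrix.one_mulVec]
  have h2 : (r ^ n - 1) • v = 0 := by rw [sub_smul, one_smul, ← h1, sub_self]
  rcases smul_eq_zero.mp h2 with h | h
  · exact sub_eq_zero.mp h
  · exact absurd h hv0

open Polynomial Matrix in
private lemma myTraceInv {d n : ℕ} (hn : 0 < n) (M : Matrix (Fin d) (Fin d) ℂ)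
    (hM : M ^ n = 1) :
    Matrix.trace M⁻¹ = starRingEnd ℂ (Matrix.trace M) := by
  classical
  set R := M.charpoly.roots with hR
  have hsplits : M.charpoly.Splits := IsAlgClosed.splits _
  have hcard : Multiset.card R = d := by
    rw [hR, (Polynomial.splits_iff_card_roots).mp hsplits, Matrix.charpoly_natDegree_eq_dim,
      Fintype.card_fin]
  have hroot : ∀ r ∈ R, r ^ n = 1 := fun r hr => myRootPow M hM hr
  have hrne : ∀ r ∈ R, r ≠ 0 := by
    intro r hr h0
    have := hroot r hr
    rw [h0, zero_pow hn.ne'] at this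
    exact zero_ne_one this
  have hprod : M.charpoly = (R.map fun r => X - C r).prod :=
    hsplits.eq_prod_roots_of_monic M.charpoly_monic
  have hdetM : M.det = R.prod := Matrix.det_eq_prod_roots_charpoly M
  have hdet0 : M.det ≠ 0 := by
    intro h
    have : M.det ^ n = 1 := by rw [← Matrix.det_pow, hM, Matrix.det_one]
    rw [h, zero_pow hn.ne'] at this; exact zero_ne_one this
  have hdetinv : M⁻¹.det = (R.map Inv.inv).prod := by
    rw [Matrix.det_nonsing_inv, Ring.inverse_eq_inv]
    have h1 : (R.map fun r => r⁻¹ * r).prod = 1 := by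
      rw [Multiset.map_congr rfl (fun r hr => inv_mul_cancel₀ (hrne r hr))]
      simp
    rw [Multiset.prod_map_mul] at h1
    simp only [Multiset.map_id'] at h1
    rw [hdetM]
    exact (eq_inv_of_mul_eq_one_left h1).symm
  have hMinvM : M⁻¹ * M = 1 := Matrix.nonsing_inv_mul M (Ne.isUnit hdet0)
  have key : M⁻¹.charpoly = ((R.map Inv.inv).map fun r => X - C r).prod := by
    apply Polynomial.funext
    intro x
    rw [myEvalCharpoly]
    have hRHS : (((R.map Inv.inv).map fun r => X - C r).prod).eval x
        = (R.map fun r => x - r⁻¹).prod := by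
      rw [Polynomial.eval_multiset_prod, Multiset.map_map, Multiset.map_map]
      congr 1
      exact Multiset.map_congr rfl (fun r _ => by simp)
    rw [hRHS]
    have h1 : x • (1 : Matrix (Fin d) (Fin d) ℂ) - M⁻¹ = M⁻¹ * (x • M - 1) := by
      rw [mul_sub, mul_one, Matrix.mul_smul, hMinvM]
    rw [h1, Matrix.det_mul, hdetinv]
    rcases eq_or_ne x 0 with hx | hx
    · subst hx
      rw [zero_smul, zero_sub, Matrix.det_neg, Matrix.det_one, mul_one, Fintype.card_fin]
      have h2 : (R.map fun r => (0:ℂ) - r⁻¹).prod = (-1)^d * (R.map Inv.inv).prod := by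
        have h3 : (R.map fun r => (0:ℂ) - r⁻¹) = R.map fun r => (-1) * r⁻¹ :=
          Multiset.map_congr rfl (fun r _ => by ring)
        rw [h3, Multiset.prod_map_mul, Multiset.map_const', Multiset.prod_replicate, hcard]
      rw [h2, mul_comm]
    · have h2 : x • M - 1 = x • (M - x⁻¹ • (1 : Matrix (Fin d) (Fin d) ℂ)) := by
        rw [smul_sub, smul_smul, mul_inv_cancel₀ hx, one_smul]
      rw [h2, Matrix.det_smul, Fintype.card_fin]
      have h3 : (M - x⁻¹ • (1 : Matrix (Fin d) (Fin d) ℂ)).det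
          = (-1)^d * (R.map fun r => x⁻¹ - r).prod := by
        rw [(neg_sub (x⁻¹ • (1 : Matrix (Fin d) (Fin d) ℂ)) M).symm, Matrix.det_neg,
          Fintype.card_fin, ← myEvalCharpoly, hprod,
          Polynomial.eval_multiset_prod, Multiset.map_map]
        congr 2
        exact Multiset.map_congr rfl (fun r _ => by simp)
      rw [h3]
      have hx' : (x : ℂ) ^ d = (R.map fun _ => x).prod := by
        rw [Multiset.map_const', Multiset.prod_replicate, hcard]
      have hneg : ((-1 : ℂ)) ^ d = (R.map fun _ => (-1:ℂ)).prod := by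
        rw [Multiset.map_const', Multiset.prod_replicate, hcard]
      rw [hx', hneg, ← Multiset.prod_map_mul, ← Multiset.prod_map_mul, ← Multiset.prod_map_mul]
      apply congrArg Multiset.prod
      apply Multiset.map_congr rfl
      intro r hr
      have h0 := hrne r hr
      field_simp
      ring
  have htrinv : M⁻¹.trace = (R.map Inv.inv).sum := by
    rw [Matrix.trace_eq_sum_roots_charpoly, key, Polynomial.roots_multiset_prod_X_sub_C]
  have htr : Matrix.trace M = R.sum := Matrix.trace_eq_sum_roots_charpoly M
  rw [htrinv, htr, map_multiset_sum]
  apply congrArg Multiset.sum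
  apply Multiset.map_congr rfl
  intro r hr
  have habs : ‖r‖ = 1 := by
    have h1 : ‖r‖ ^ n = 1 := by rw [← norm_pow, hroot r hr, norm_one]
    have h2 : (0:ℝ) ≤ ‖r‖ := norm_nonneg _
    rcases lt_trichotomy ‖r‖ 1 with h | h | h
    · have := pow_lt_one₀ h2 h hn.ne'; linarith
    · exact h
    · have := one_lt_pow₀ h hn.ne'; linarith
  have hmul : r * starRingEnd ℂ r = 1 := by
    rw [Complex.mul_conj]
    norm_cast
    rw [Complex.normSq_eq_norm_sq, habs, one_pow]
  exact (eq_inv_of_mul_eq_one_left (by rw [mul_comm] at hmul; exact hmul)).symm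

private lemma myCharInv {H : Type} [Group H] [Fintype H] (V : FDRep ℂ H) (g : H) :
    V.character g⁻¹ = starRingEnd ℂ (V.character g) := by
  classical
  let b := Module.finBasis ℂ V
  have ht : ∀ h : H, V.character h = Matrix.trace (LinearMap.toMatrix b b (V.ρ h)) := by
    intro h
    rw [FDRep.character, LinearMap.trace_eq_matrix_trace ℂ b]
  set M := LinearMap.toMatrix b b (V.ρ g) with hMdef
  have hMn : M ^ Fintype.card H = 1 := by
    rw [hMdef, LinearMap.toMatrix_pow b, ← map_pow, pow_card_eq_one, map_one,
      LinearMap.toMatrix_one]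
  have hMinv : M⁻¹ = LinearMap.toMatrix b b (V.ρ g⁻¹) := by
    apply Matrix.inv_eq_right_inv
    rw [hMdef, ← LinearMap.toMatrix_mul, ← map_mul, mul_inv_cancel, map_one,
      LinearMap.toMatrix_one]
  rw [ht g⁻¹, ht g, ← hMinv, ← hMdef]
  exact myTraceInv Fintype.card_pos M hMn

private lemma myOrtho (H : GrpCat) [Fintype H] (V W : FDRep ℂ H) [Simple V] [Simple W]
    (hcard0 : (Fintype.card H : ℂ) ≠ 0) :
    (Fintype.card H : ℂ)⁻¹ * ∑ g : H, V.character g * W.character g⁻¹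
      = if Nonempty (V ≅ W) then 1 else 0 := by
  haveI : Invertible (Nat.card H : ℂ) := by rw [Nat.card_eq_fintype_card]; exact invertibleOfNonzero hcard0
  have h := FDRep.char_orthonormal V W
  rw [Nat.card_eq_fintype_card] at h
  rcases Classical.em (Nonempty (V ≅ W)) with hne | hne
  · rw [if_pos hne] at h ⊢; simpa using h
  · rw [if_neg hne] at h ⊢; simpa using h

/-- For a nontrivial finite subgroup `G ⊂ SL₂(ℂ)` with standard character `χ₀`, a fixed
conjugation-invariant choice of square roots `s g` of `χ₀ g - 2`, and the vectors
`v ρ g = (1/√|G|) s g ρ g`, the bilinear pairing of `v ρ₁` and `v ρ₂` is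
`⟨χ₀·ρ₁, ρ₂⟩ - 2δ_{ρ₁,ρ₂}` for nontrivial irreducible characters `ρ₁, ρ₂`. -/
theorem stmt10 (G : Subgroup (Matrix.SpecialLinearGroup (Fin 2) ℂ)) [Fintype G]
    (hGnt : Nontrivial G)
    (χ₀ : G → ℂ)
    (hχ₀ : ∀ g : G, χ₀ g =
      Matrix.trace ((g : Matrix.SpecialLinearGroup (Fin 2) ℂ) : Matrix (Fin 2) (Fin 2) ℂ))
    (s : G → ℂ)
    (hs : ∀ g : G, g ≠ 1 → s g ^ 2 = χ₀ g - 2)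
    (hsconj : ∀ g : G, g ≠ 1 → s g⁻¹ * s g = χ₀ g - 2)
    (ρ₁ ρ₂ : G → ℂ)
    (h₁ : ∃ V : FDRep ℂ G, Simple V ∧ V.character = ρ₁)
    (h₂ : ∃ V : FDRep ℂ G, Simple V ∧ V.character = ρ₂)
    (hnt₁ : ρ₁ ≠ fun _ => 1) (hnt₂ : ρ₂ ≠ fun _ => 1)
    (v : (G → ℂ) → G → ℂ)
    (hv : ∀ ρ (g : G), v ρ g = ((Real.sqrt (Fintype.card G) : ℂ))⁻¹ * s g * ρ g)
    (inner : (G → ℂ) → (G → ℂ) → ℂ)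
    (hinner : ∀ α β, inner α β =
      (Fintype.card G : ℂ)⁻¹ * ∑ g : G, α g * starRingEnd ℂ (β g)) :
    ∑ g ∈ Finset.univ.filter (fun g : G => g ≠ 1), v ρ₁ g * v ρ₂ g⁻¹
      = inner (χ₀ * ρ₁) ρ₂ - 2 * (if ρ₁ = ρ₂ then 1 else 0) := by
  classical
  obtain ⟨V₁, hS₁, hc₁⟩ := h₁
  obtain ⟨V₂, hS₂, hc₂⟩ := h₂
  haveI := hS₁
  haveI := hS₂
  have hcard0 : (Fintype.card G : ℂ) ≠ 0 := Nat.cast_ne_zero.mpr Fintype.card_pos.ne'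
  set c : ℂ := ((Real.sqrt (Fintype.card G) : ℂ))⁻¹ with hc
  have hsq : c * c = (Fintype.card G : ℂ)⁻¹ := by
    rw [hc, ← mul_inv]
    congr 1
    rw [← Complex.ofReal_mul, Real.mul_self_sqrt (Nat.cast_nonneg _)]
    norm_cast
  have hchi1 : χ₀ 1 = 2 := by
    rw [hχ₀ 1]
    simp [Matrix.trace]
  -- conj of ρ₂
  have hconj2 : ∀ g : G, starRingEnd ℂ (ρ₂ g) = ρ₂ g⁻¹ := by
    intro g
    rw [← hc₂]
    exact (myCharInv V₂ g).symm
  -- termwise rewriting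
  set f : G → ℂ := fun g => (Fintype.card G : ℂ)⁻¹ * ((χ₀ g - 2) * (ρ₁ g * ρ₂ g⁻¹)) with hf
  have hstep1 : ∑ g ∈ Finset.univ.filter (fun g : G => g ≠ 1), v ρ₁ g * v ρ₂ g⁻¹
      = ∑ g : G, f g := by
    rw [show (Finset.univ.filter (fun g : G => g ≠ 1)) = Finset.univ.erase 1 from
      Finset.filter_ne' Finset.univ 1]
    have hterm : ∀ g ∈ Finset.univ.erase (1 : G), v ρ₁ g * v ρ₂ g⁻¹ = f g := by
      intro g hg
      have hg1 : g ≠ 1 := (Finset.mem_erase.mp hg).1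
      rw [hv, hv, hf]
      have : c * s g * ρ₁ g * (c * s g⁻¹ * ρ₂ g⁻¹)
          = (c * c) * ((s g⁻¹ * s g) * (ρ₁ g * ρ₂ g⁻¹)) := by ring
      rw [this, hsq, hsconj g hg1]
    rw [Finset.sum_congr rfl hterm]
    exact Finset.sum_erase _ (by simp [hf, hchi1])
  rw [hstep1]
  -- split the sum
  have hsplit : ∑ g : G, f g
      = (Fintype.card G : ℂ)⁻¹ * (∑ g : G, (χ₀ g * ρ₁ g) * ρ₂ g⁻¹)
        - 2 * ((Fintype.card G : ℂ)⁻¹ * ∑ g : G, ρ₁ g * ρ₂ g⁻¹) := by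
    rw [Finset.mul_sum, Finset.mul_sum, Finset.mul_sum, ← Finset.sum_sub_distrib]
    apply Finset.sum_congr rfl
    intro g _
    simp only [hf]
    ring
  rw [hsplit]
  have hinner' : inner (χ₀ * ρ₁) ρ₂
      = (Fintype.card G : ℂ)⁻¹ * (∑ g : G, (χ₀ g * ρ₁ g) * ρ₂ g⁻¹) := by
    rw [hinner]
    congr 1
    apply Finset.sum_congr rfl
    intro g _
    rw [Pi.mul_apply, hconj2 g]
  have horth : (Fintype.card G : ℂ)⁻¹ * ∑ g : G, ρ₁ g * ρ₂ g⁻¹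
      = if ρ₁ = ρ₂ then 1 else 0 := by
    letI : Fintype ↑(GrpCat.of G) := ‹Fintype G›
    by_cases h : ρ₁ = ρ₂
    · rw [if_pos h]
      have horth1 := myOrtho (GrpCat.of G) V₁ V₁ (by exact hcard0)
      rw [if_pos ⟨Iso.refl V₁⟩, hc₁] at horth1
      rw [← h]
      exact horth1
    · rw [if_neg h]
      have horth1 := myOrtho (GrpCat.of G) V₁ V₂ (by exact hcard0)
      have hni : ¬ Nonempty (V₁ ≅ V₂) := by
        rintro ⟨i⟩
        exact h (hc₁ ▸ hc₂ ▸ FDRep.char_iso i)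
      rw [if_neg hni, hc₁, hc₂] at horth1
      exact horth1
  rw [hinner', horth]
end

section
/- Let G be a finite subgroup of SL₂(ℂ) with standard character χ₀. The square matrix M indexed by nontrivial irreducible characters ρ (rows) and nonidentity conjugacy classes [g] (columns), with entries M(ρ,[g]) = √(χ₀(g) − 2)·ρ(g), is invertible. -/
open CategoryTheory



lemma aux_sl2 (g : Matrix.SpecialLinearGroup (Fin 2) ℂ) (m : ℕ) (hm : 0 < m)
    (hgm : g ^ m = 1) (hg : g ≠ 1) :
    Matrix.trace ((g : Matrix.SpecialLinearGroup (Fin 2) ℂ) : Matrix (Fin 2) (Fin 2) ℂ) ≠ 2 := by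
  intro htr
  set A : Matrix (Fin 2) (Fin 2) ℂ := (g : Matrix (Fin 2) (Fin 2) ℂ) with hA
  have hdet : A.det = 1 := g.2
  have htr2 : A 0 0 + A 1 1 = 2 := by
    rw [Matrix.trace_fin_two] at htr; exact htr
  have hdet2 : A 0 0 * A 1 1 - A 0 1 * A 1 0 = 1 := by
    rw [Matrix.det_fin_two] at hdet; exact hdet
  have hd : A 1 1 = 2 - A 0 0 := by linear_combination htr2
  have hbc : A 0 1 * A 1 0 = -(A 0 0 - 1) ^ 2 := by
    linear_combination (-1 : ℂ) * hdet2 + A 0 0 * hd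
  set N : Matrix (Fin 2) (Fin 2) ℂ := A - 1 with hN
  have hN2 : N * N = 0 := by
    ext i j
    fin_cases i <;> fin_cases j <;>
      simp [hN, Matrix.mul_apply, Fin.sum_univ_two, Matrix.sub_apply, Matrix.one_apply]
    · linear_combination hbc
    · linear_combination (A 0 1) * htr2
    · linear_combination (A 1 0) * htr2
    · linear_combination hbc + (A 1 1 - A 0 0) * htr2
  have key : ∀ j : ℕ, A ^ j = 1 + (j : ℂ) • N := by
    intro j
    induction j with
    | zero => simp
    | succ k ih =>
      have hA1 : A = 1 + N := by simp [hN]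
      rw [pow_succ, ih, hA1]
      push_cast
      rw [mul_add, add_mul, add_mul]
      simp only [smul_mul_assoc, hN2, smul_zero, mul_one, one_mul, add_zero]
      rw [add_smul, one_smul]
      abel
  have hAm : A ^ m = 1 := by
    have : ((g ^ m : Matrix.SpecialLinearGroup (Fin 2) ℂ) : Matrix (Fin 2) (Fin 2) ℂ) = 1 := by
      rw [hgm]; rfl
    rw [← this]; simp [hA]
  have hmN : (m : ℂ) • N = 0 := by
    have h := key m
    rw [hAm] at h
    exact left_eq_add.mp h
  have hNz : N = 0 := by
    have hm' : (m : ℂ) ≠ 0 := Nat.cast_ne_zero.mpr hm.ne'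
    have := smul_eq_zero.mp hmN
    tauto
  apply hg
  apply Subtype.coe_injective
  show A = _
  rw [← sub_eq_zero]
  exact hNz

open CategoryTheory Module

lemma aux_sum_char {G : Type} [Group G] [Fintype G] (V : FDRep ℂ G) [Simple V]
    (h : V.character ≠ fun _ => 1) : ∑ g : G, V.character g = 0 := by
  haveI : Invertible ((Fintype.card G : ℂ)) :=
    invertibleOfNonzero (Nat.cast_ne_zero.mpr Fintype.card_ne_zero)
  have havg := FDRep.average_char_eq_finrank_invariants V
  have hinv : Representation.invariants V.ρ = ⊥ := by
    by_contra hne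
    obtain ⟨v, hvmem, hv⟩ := Submodule.ne_bot_iff _ |>.mp hne
    let T : FDRep ℂ G := FDRep.of (Representation.trivial ℂ (G := G) (V := ℂ))
    let f : T ⟶ V :=
      { hom := InducedCategory.homMk (ModuleCat.ofHom (LinearMap.toSpanSingleton ℂ V v))
        comm := fun g => by
          ext
          show ((1 : ℂ) • v : V) = V.ρ g ((1 : ℂ) • v)
          rw [map_smul, hvmem g] }
    have hfinj : Function.Injective (LinearMap.toSpanSingleton ℂ V v) := by
      intro x y hxy
      have : (x - y) • v = 0 := by
        simpa [sub_smul] using sub_eq_zero.mpr hxy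
      rcases smul_eq_zero.mp this with h' | h'
      · exact sub_eq_zero.mp h'
      · exact absurd h' hv
    haveI : Mono f := by
      apply ConcreteCategory.mono_of_injective
      exact hfinj
    have hf0 : f ≠ 0 := by
      intro h0
      apply hv
      have : f.hom (1 : ℂ) = 0 := by rw [h0]; rfl
      rw [show f.hom (1 : ℂ) = (1 : ℂ) • v from rfl, one_smul] at this
      exact this
    haveI : IsIso f := (Simple.mono_isIso_iff_nonzero f).mpr hf0
    apply h
    have := FDRep.char_iso (asIso f)
    rw [← this]
    funext g
    show LinearMap.trace ℂ _ (T.ρ g) = 1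
    have h1 : T.ρ g = LinearMap.id := rfl
    rw [h1, LinearMap.trace_id]
    exact_mod_cast congrArg (Nat.cast (R := ℂ)) (Module.finrank_self ℂ)
  rw [hinv] at havg
  simp only [finrank_bot, Nat.cast_zero] at havg
  calc ∑ g : G, V.character g
      = (Fintype.card G : ℂ) • (⅟(Fintype.card G : ℂ) • ∑ g : G, V.character g) := by
        rw [smul_smul, mul_invOf_self, one_smul]
    _ = 0 := by rw [invOf_eq_inv, smul_eq_mul, smul_eq_mul, ← Nat.card_eq_fintype_card, havg, mul_zero]

open CategoryTheory


open scoped Classical in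
lemma aux_orth {G : Type} [Group G] [Fintype G] (V W : FDRep ℂ G) [Simple V] [Simple W] :
    ∑ g : G, V.character g * W.character g⁻¹ =
      if Nonempty (V ≅ W) then (Fintype.card G : ℂ) else 0 := by
  have h := FDRep.char_orthonormal (k := ℂ) V W
  have hc : (Nat.card G : ℂ) ≠ 0 := Nat.cast_ne_zero.mpr Nat.card_pos.ne'
  rw [inv_mul_eq_iff_eq_mul₀ hc, Nat.card_eq_fintype_card] at h
  rw [h]; split_ifs <;> simp


/-- For a finite subgroup `G ⊂ SL₂(ℂ)` with standard character `χ₀`, the square matrix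
with entries `√(χ₀ g - 2)·ρ(g)`, rows indexed by the nontrivial irreducible characters
`ρ` and columns by representatives `c j` of the nonidentity conjugacy classes, is
invertible. -/
theorem stmt11 (G : Subgroup (Matrix.SpecialLinearGroup (Fin 2) ℂ)) [Fintype G]
    (χ₀ : G → ℂ)
    (hχ₀ : ∀ g : G, χ₀ g =
      Matrix.trace ((g : Matrix.SpecialLinearGroup (Fin 2) ℂ) : Matrix (Fin 2) (Fin 2) ℂ))
    (s : G → ℂ)
    (hs : ∀ g : G, g ≠ 1 → s g ^ 2 = χ₀ g - 2)
    (n : ℕ) (ρ : Fin n → G → ℂ) (c : Fin n → G)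
    (hρirr : ∀ i, ∃ V : FDRep ℂ G, Simple V ∧ V.character = ρ i)
    (hρnt : ∀ i, ρ i ≠ fun _ => 1)
    (hρinj : Function.Injective ρ)
    (hρsurj : ∀ V : FDRep ℂ G, Simple V → V.character ≠ (fun _ => 1) → ∃ i, V.character = ρ i)
    (hc1 : ∀ i, c i ≠ 1)
    (hcinj : ∀ i j, IsConj (c i) (c j) → i = j)
    (hcsurj : ∀ g : G, g ≠ 1 → ∃ i, IsConj g (c i)) :
    IsUnit (Matrix.of fun i j : Fin n => s (c j) * ρ i (c j)) := by

  classical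
  choose V hVsimple hVchar using hρirr
  haveI : Invertible ((Fintype.card G : ℂ)) :=
    invertibleOfNonzero (Nat.cast_ne_zero.mpr Fintype.card_ne_zero)
  -- s is nonzero on the c j
  have hs0 : ∀ j, s (c j) ≠ 0 := by
    intro j hzero
    have h2 := hs (c j) (hc1 j)
    rw [hzero] at h2
    have htr : Matrix.trace (((c j : G) : Matrix.SpecialLinearGroup (Fin 2) ℂ) :
        Matrix (Fin 2) (Fin 2) ℂ) = 2 := by
      rw [← hχ₀]
      linear_combination -h2
    refine aux_sl2 ((c j : G) : Matrix.SpecialLinearGroup (Fin 2) ℂ) (orderOf (c j))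
      (orderOf_pos _) ?_ ?_ htr
    · rw [← SubgroupClass.coe_pow, pow_orderOf_eq_one]; rfl
    · intro h1
      exact hc1 j (by exact_mod_cast OneMemClass.coe_eq_one.mp h1)
  rw [Matrix.isUnit_iff_isUnit_det, isUnit_iff_ne_zero]
  have hfact : (Matrix.of fun i j : Fin n => s (c j) * ρ i (c j)) =
      (Matrix.of fun i j : Fin n => ρ i (c j)) * Matrix.diagonal (fun j => s (c j)) := by
    ext i j
    simp [Matrix.mul_diagonal]
    ring
  rw [hfact, Matrix.det_mul, Matrix.det_diagonal]
  refine mul_ne_zero ?_ (Finset.prod_ne_zero_iff.mpr fun j _ => hs0 j)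
  rw [Ne, ← Matrix.exists_vecMul_eq_zero_iff]
  rintro ⟨v, hv, hvA⟩
  apply hv
  -- characters are constant on conjugacy classes
  have hρconst : ∀ i (g h : G), IsConj g h → ρ i g = ρ i h := by
    rintro i g h ⟨u, hu⟩
    have hh : h = (u : G) * g * (u : G)⁻¹ := by
      symm; rw [mul_inv_eq_iff_eq_mul]; exact hu.eq
    rw [← hVchar i, hh, FDRep.char_conj]
  set f : G → ℂ := fun g => ∑ i, v i * ρ i g with hf_def
  have hf_ne : ∀ g : G, g ≠ 1 → f g = 0 := by
    intro g hg
    obtain ⟨j, hj⟩ := hcsurj g hg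
    have hcol := congrFun hvA j
    simp only [Matrix.vecMul, dotProduct, Matrix.of_apply, Pi.zero_apply] at hcol
    calc f g = ∑ i, v i * ρ i (c j) := by
          simp only [hf_def]
          exact Finset.sum_congr rfl fun i _ => by rw [hρconst i g (c j) hj]
      _ = 0 := hcol
  have hsum_char : ∀ i, ∑ g : G, ρ i g = 0 := by
    intro i
    haveI := hVsimple i
    have := aux_sum_char (V i) (by rw [hVchar i]; exact hρnt i)
    rwa [hVchar i] at this
  have hf1 : f 1 = 0 := by
    have h1 : ∑ g : G, f g = f 1 :=
      Finset.sum_eq_single_of_mem 1 (Finset.mem_univ 1) fun b _ hb => hf_ne b hb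
    have h2 : ∑ g : G, f g = 0 := by
      simp only [hf_def]
      rw [Finset.sum_comm]
      refine Finset.sum_eq_zero fun i _ => ?_
      rw [← Finset.mul_sum, hsum_char i, mul_zero]
    rw [← h1, h2]
  have hf : ∀ g : G, f g = 0 := by
    intro g
    by_cases hg : g = 1
    · rw [hg]; exact hf1
    · exact hf_ne g hg
  -- orthogonality
  funext i
  haveI := hVsimple i
  have hiso : ∀ j, Nonempty (V j ≅ V i) ↔ j = i := by
    intro j
    constructor
    · rintro ⟨e⟩
      exact hρinj (by rw [← hVchar j, ← hVchar i, FDRep.char_iso e])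
    · rintro rfl; exact ⟨Iso.refl _⟩
  have horth : ∀ j, ∑ g : G, ρ j g * ρ i g⁻¹ =
      if j = i then (Fintype.card G : ℂ) else 0 := by
    intro j
    haveI := hVsimple j
    have h := aux_orth (V j) (V i)
    rw [hVchar j, hVchar i] at h
    rw [h]
    by_cases hji : j = i
    · simp [hji, (hiso j).mpr hji]
    · have hno : ¬ Nonempty (V j ≅ V i) := fun hn => hji ((hiso j).mp hn)
      simp [hji, hno]
  have hS : ∑ g : G, f g * ρ i g⁻¹ = 0 := by
    refine Finset.sum_eq_zero fun g _ => by rw [hf g, zero_mul]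
  have hS2 : ∑ g : G, f g * ρ i g⁻¹ = v i * (Fintype.card G : ℂ) := by
    simp only [hf_def, Finset.sum_mul]
    rw [Finset.sum_comm]
    calc ∑ j, ∑ g : G, v j * ρ j g * ρ i g⁻¹
        = ∑ j, if j = i then v j * (Fintype.card G : ℂ) else 0 := by
          refine Finset.sum_congr rfl fun j _ => ?_
          have : ∑ g : G, v j * ρ j g * ρ i g⁻¹ = v j * ∑ g : G, ρ j g * ρ i g⁻¹ := by
            rw [Finset.mul_sum]
            exact Finset.sum_congr rfl fun g _ => by ring
          rw [this, horth j]
          split_ifs with hji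
          · rfl
          · rw [mul_zero]
      _ = v i * (Fintype.card G : ℂ) := by simp
  rw [hS] at hS2
  have := (mul_eq_zero.mp hS2.symm)
  rcases this with h' | h'
  · exact h'
  · exact absurd h' (Nat.cast_ne_zero.mpr Fintype.card_ne_zero)
end

section
/- Let G be a finite subgroup of SL₂(ℂ) with standard character χ₀, and let M be the matrix with entries M(ρ,[g]) = (1/√|G|)·√(χ₀(g)−2)·ρ(g) for nontrivial irreducibles ρ and nonidentity conjugacy classes [g] (square roots chosen so that √(χ₀(g)−2)·√(χ₀(g⁻¹)−2) = χ₀(g)−2). Then M transforms the bilinear form B(e_g, e_h) = δ_{h,g⁻¹} (summed over group elements) into the form A(ρ₁,ρ₂) = ⟨χ₀·ρ₁, ρ₂⟩ − 2δ_{ρ₁,ρ₂}: that is, Σ_{g,h ≠ 1} M(ρ₁,g)·M(ρ₂,h)·δ_{h,g⁻¹} = ⟨χ₀·ρ₁,ρ₂⟩ − 2δ_{ρ₁,ρ₂}. -/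
open CategoryTheory Polynomial Module
open scoped Classical

lemma my_char_inv {G : Type} [Group G] [Fintype G] (V : FDRep ℂ G) (g : G) :
    V.character g⁻¹ = starRingEnd ℂ (V.character g) := by
  classical
  set n := orderOf g with hn
  have hnpos : 0 < n := orderOf_pos g
  have hn0 : (n : ℂ) ≠ 0 := Nat.cast_ne_zero.mpr hnpos.ne'
  set f : Module.End ℂ V := V.ρ g with hf
  set f' : Module.End ℂ V := V.ρ g⁻¹ with hf'
  have hcomm : f * f' = 1 := by rw [hf, hf', ← map_mul, mul_inv_cancel, map_one]
  have hcomm' : f' * f = 1 := by rw [hf, hf', ← map_mul, inv_mul_cancel, map_one]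
  have hfn : f ^ n = 1 := by rw [hf, ← map_pow, pow_orderOf_eq_one, map_one]
  have hss : f.IsSemisimple :=
    Module.End.isSemisimple_of_squarefree_aeval_eq_zero
      ((Polynomial.X_pow_sub_one_separable_iff.mpr hn0).squarefree)
      (by simp [map_sub, map_pow, hfn])
  set N : ℂ → Submodule ℂ V := fun μ => f.eigenspace μ with hN
  have hsup : ⨆ μ, N μ = ⊤ := by
    have h1 := Module.End.iSup_maxGenEigenspace_eq_top f
    have h2 : ∀ μ, f.maxGenEigenspace μ = f.eigenspace μ :=
      fun μ => hss.isFinitelySemisimple.maxGenEigenspace_eq_eigenspace μ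
    simpa [hN, h2] using h1
  have hind : iSupIndep N := Module.End.independent_genEigenspace f 1
  have hInt : DirectSum.IsInternal N :=
    (DirectSum.isInternal_submodule_iff_iSupIndep_and_iSup_eq_top N).mpr ⟨hind, hsup⟩
  have hfin : {μ | N μ ≠ ⊥}.Finite := WellFoundedGT.finite_ne_bot_of_iSupIndep hind
  have hmapsf : ∀ μ, Set.MapsTo f (N μ) (N μ) := by
    intro μ x hx
    have hx' : f x = μ • x := Module.End.mem_eigenspace_iff.mp hx
    show f x ∈ f.eigenspace μ
    rw [Module.End.mem_eigenspace_iff, hx', map_smul, hx']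
  have hmapsf' : ∀ μ, Set.MapsTo f' (N μ) (N μ) := by
    intro μ x hx
    have hx' : f x = μ • x := Module.End.mem_eigenspace_iff.mp hx
    show f' x ∈ f.eigenspace μ
    rw [Module.End.mem_eigenspace_iff]
    have : f (f' x) = f' (f x) := by
      rw [← Module.End.mul_apply, ← Module.End.mul_apply, hcomm, hcomm']
    rw [this, hx', map_smul]
  -- eigenvalues are n-th roots of unity
  have hroot : ∀ μ, N μ ≠ ⊥ → μ ^ n = 1 := by
    intro μ hμ
    have hev : f.HasEigenvalue μ := hμ
    obtain ⟨v, hv, hv0⟩ := hev.exists_hasEigenvector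
    have hfv : f v = μ • v := Module.End.mem_eigenspace_iff.mp hv
    have hpow : ∀ k : ℕ, (f ^ k) v = μ ^ k • v := by
      intro k
      induction k with
      | zero => simp
      | succ k ih =>
        rw [pow_succ, Module.End.mul_apply, hfv, map_smul, ih, smul_smul, pow_succ,
          mul_comm μ (μ ^ k)]
    have := hpow n
    rw [hfn] at this
    have h2 : (μ ^ n - 1) • v = 0 := by
      rw [sub_smul, one_smul, ← this]; simp
    rcases smul_eq_zero.mp h2 with h | h
    · exact sub_eq_zero.mp h
    · exact absurd h hv0
  have hne0 : ∀ μ, N μ ≠ ⊥ → μ ≠ 0 := by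
    intro μ hμ h0
    have := hroot μ hμ
    rw [h0, zero_pow hnpos.ne'] at this
    exact zero_ne_one this
  have hconj : ∀ μ, N μ ≠ ⊥ → starRingEnd ℂ μ = μ⁻¹ := by
    intro μ hμ
    have habs : ‖μ‖ = 1 := by
      have h1 : ‖μ‖ ^ n = 1 := by
        rw [← norm_pow, hroot μ hμ, norm_one]
      rcases lt_trichotomy (‖μ‖) 1 with h | h | h
      · have := pow_lt_one₀ (norm_nonneg μ) h hnpos.ne'
        rw [h1] at this; exact absurd this (lt_irrefl 1)
      · exact h
      · have := one_lt_pow₀ h hnpos.ne'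
        rw [h1] at this; exact absurd this (lt_irrefl 1)
    rw [Complex.inv_def, Complex.normSq_eq_norm_sq, habs]
    simp
  have hresf : ∀ μ, f.restrict (hmapsf μ) = (μ • 1 : Module.End ℂ (N μ)) := by
    intro μ
    ext x
    have hx' : f (x : CoeSort.coe V) = μ • (x : CoeSort.coe V) :=
      Module.End.mem_eigenspace_iff.mp x.2
    change f (x : CoeSort.coe V) = _; simpa using hx'
  have hresf' : ∀ μ, N μ ≠ ⊥ → f'.restrict (hmapsf' μ) = (μ⁻¹ • 1 : Module.End ℂ (N μ)) := by
    intro μ hμ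
    ext x
    have hx' : f (x : CoeSort.coe V) = μ • (x : CoeSort.coe V) :=
      Module.End.mem_eigenspace_iff.mp x.2
    have h2 : μ • f' (x : CoeSort.coe V) = (x : CoeSort.coe V) := by
      calc μ • f' (x : CoeSort.coe V) = f' (μ • (x : CoeSort.coe V)) :=
            (map_smul f' μ (x : CoeSort.coe V)).symm
        _ = f' (f (x : CoeSort.coe V)) := by rw [hx']
        _ = (x : CoeSort.coe V) := by rw [← Module.End.mul_apply, hcomm']; rfl
    have : f' (x : CoeSort.coe V) = μ⁻¹ • (x : CoeSort.coe V) :=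
      (eq_inv_smul_iff₀ (hne0 μ hμ)).mpr h2
    change f' (x : CoeSort.coe V) = _; simpa using this
  have htrf : LinearMap.trace ℂ _ f
      = ∑ μ ∈ hfin.toFinset, μ * (finrank ℂ (N μ) : ℂ) := by
    rw [LinearMap.trace_eq_sum_trace_restrict' hInt hfin hmapsf]
    refine Finset.sum_congr rfl fun μ hμ => ?_
    rw [hresf μ, map_smul, LinearMap.trace_one, smul_eq_mul]
  have htrf' : LinearMap.trace ℂ _ f'
      = ∑ μ ∈ hfin.toFinset, μ⁻¹ * (finrank ℂ (N μ) : ℂ) := by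
    rw [LinearMap.trace_eq_sum_trace_restrict' hInt hfin hmapsf']
    refine Finset.sum_congr rfl fun μ hμ => ?_
    rw [hresf' μ (Set.Finite.mem_toFinset hfin |>.mp hμ), map_smul, LinearMap.trace_one,
      smul_eq_mul]
  have hchar : V.character g = LinearMap.trace ℂ _ f := rfl
  have hchar' : V.character g⁻¹ = LinearMap.trace ℂ _ f' := rfl
  rw [hchar, hchar', htrf, htrf', map_sum]
  refine Finset.sum_congr rfl fun μ hμ => ?_
  rw [map_mul, map_natCast, hconj μ (Set.Finite.mem_toFinset hfin |>.mp hμ)]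


lemma my_orth {G : Type} [Group G] [Fintype G] (V W : FDRep ℂ G) [Simple V] [Simple W] :
    (Fintype.card G : ℂ)⁻¹ * ∑ g : G, V.character g * W.character g⁻¹ =
      if V.character = W.character then 1 else 0 := by
  haveI : Invertible ((Nat.card G) : ℂ) :=
    invertibleOfNonzero (Nat.cast_ne_zero.mpr Nat.card_pos.ne')
  have horth : (Fintype.card G : ℂ)⁻¹ * ∑ g : G, V.character g * W.character g⁻¹ =
      if Nonempty (V ≅ W) then (1 : ℂ) else 0 := by
    have h := FDRep.char_orthonormal (k := ℂ) (G := G) V W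
    rw [Nat.card_eq_fintype_card] at h
    push_cast at h
    exact h
  by_cases hc : V.character = W.character
  · have hiso : Nonempty (V ≅ W) := by
      by_contra hn
      rw [if_neg hn] at horth
      have horth' : (Fintype.card G : ℂ)⁻¹ * ∑ g : G, W.character g * W.character g⁻¹ =
          (1 : ℂ) := by
        have h := FDRep.char_orthonormal (k := ℂ) (G := G) W W
        rw [Nat.card_eq_fintype_card, if_pos ⟨Iso.refl W⟩] at h
        push_cast at h
        exact h
      rw [hc, horth'] at horth
      simp at horth
    rw [if_pos hc, horth, if_pos hiso]
  · have hniso : ¬ Nonempty (V ≅ W) := fun ⟨i⟩ => hc (FDRep.char_iso i)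
    rw [if_neg hc, horth, if_neg hniso]


/-- For a finite subgroup `G ⊂ SL₂(ℂ)` with standard character `χ₀` and the matrix
`M ρ g = (1/√|G|)·√(χ₀ g − 2)·ρ g` (square roots chosen so that
`√(χ₀ g − 2)·√(χ₀ g⁻¹ − 2) = χ₀ g − 2`), `M` transforms the form `δ_{h,g⁻¹}` into
`⟨χ₀·ρ₁, ρ₂⟩ − 2δ_{ρ₁,ρ₂}`:
`∑_{g,h ≠ 1} M ρ₁ g · M ρ₂ h · δ_{h,g⁻¹} = ⟨χ₀·ρ₁,ρ₂⟩ − 2δ_{ρ₁,ρ₂}`. -/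
theorem stmt16 (G : Subgroup (Matrix.SpecialLinearGroup (Fin 2) ℂ)) [Fintype G]
    (χ₀ : G → ℂ)
    (hχ₀ : ∀ g : G, χ₀ g =
      Matrix.trace ((g : Matrix.SpecialLinearGroup (Fin 2) ℂ) : Matrix (Fin 2) (Fin 2) ℂ))
    (s : G → ℂ)
    (hssq : ∀ g : G, g ≠ 1 → s g ^ 2 = χ₀ g - 2)
    (hs : ∀ g : G, g ≠ 1 → s g * s g⁻¹ = χ₀ g - 2)
    (ρ₁ ρ₂ : G → ℂ)
    (h₁ : ∃ V : FDRep ℂ G, Simple V ∧ V.character = ρ₁)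
    (h₂ : ∃ V : FDRep ℂ G, Simple V ∧ V.character = ρ₂)
    (hnt₁ : ρ₁ ≠ fun _ => 1) (hnt₂ : ρ₂ ≠ fun _ => 1)
    (M : (G → ℂ) → G → ℂ)
    (hM : ∀ ρ (g : G), M ρ g = ((Real.sqrt (Fintype.card G) : ℂ))⁻¹ * s g * ρ g)
    (inner : (G → ℂ) → (G → ℂ) → ℂ)
    (hinner : ∀ α β, inner α β =
      (Fintype.card G : ℂ)⁻¹ * ∑ g : G, α g * starRingEnd ℂ (β g)) :
    ∑ g ∈ Finset.univ.filter (fun g : G => g ≠ 1),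
        ∑ h ∈ Finset.univ.filter (fun h : G => h ≠ 1),
          M ρ₁ g * M ρ₂ h * (if h = g⁻¹ then 1 else 0)
      = inner (χ₀ * ρ₁) ρ₂ - 2 * (if ρ₁ = ρ₂ then 1 else 0) := by
  classical
  obtain ⟨V₁, hS₁, hc₁⟩ := h₁
  obtain ⟨V₂, hS₂, hc₂⟩ := h₂
  haveI := hS₁
  haveI := hS₂
  have hsqrt : ((Real.sqrt (Fintype.card G) : ℂ))⁻¹ * ((Real.sqrt (Fintype.card G) : ℂ))⁻¹
      = (Fintype.card G : ℂ)⁻¹ := by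
    rw [← mul_inv, ← Complex.ofReal_mul, Real.mul_self_sqrt (Nat.cast_nonneg _)]
    push_cast
    ring
  have hχ1 : χ₀ 1 = 2 := by
    rw [hχ₀ 1]
    simp [Matrix.trace]
  have hrho2 : ∀ g : G, ρ₂ g⁻¹ = starRingEnd ℂ (ρ₂ g) := by
    intro g
    rw [← hc₂]
    exact my_char_inv V₂ g
  have horth : (Fintype.card G : ℂ)⁻¹ * ∑ g : G, ρ₁ g * ρ₂ g⁻¹
      = if ρ₁ = ρ₂ then 1 else 0 := by
    have h := my_orth V₁ V₂
    rw [hc₁, hc₂] at h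
    exact h
  have hcol : ∀ g ∈ Finset.univ.filter (fun g : G => g ≠ 1),
      (∑ h ∈ Finset.univ.filter (fun h : G => h ≠ 1),
        M ρ₁ g * M ρ₂ h * (if h = g⁻¹ then 1 else 0))
      = M ρ₁ g * M ρ₂ g⁻¹ := by
    intro g hg
    rw [Finset.mem_filter] at hg
    rw [Finset.sum_eq_single g⁻¹]
    · simp
    · intro h _ hne
      simp [hne]
    · intro habs
      exact absurd (Finset.mem_filter.mpr ⟨Finset.mem_univ _,
        fun h => hg.2 (inv_eq_one.mp h)⟩) habs
  rw [Finset.sum_congr rfl hcol]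
  have hterm : ∀ g ∈ Finset.univ.filter (fun g : G => g ≠ 1),
      M ρ₁ g * M ρ₂ g⁻¹
        = (Fintype.card G : ℂ)⁻¹ * ((χ₀ g - 2) * (ρ₁ g * ρ₂ g⁻¹)) := by
    intro g hg
    rw [Finset.mem_filter] at hg
    rw [hM, hM]
    have h1 : ((Real.sqrt (Fintype.card G) : ℂ))⁻¹ * s g * ρ₁ g *
        (((Real.sqrt (Fintype.card G) : ℂ))⁻¹ * s g⁻¹ * ρ₂ g⁻¹)
        = (((Real.sqrt (Fintype.card G) : ℂ))⁻¹ * ((Real.sqrt (Fintype.card G) : ℂ))⁻¹)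
            * ((s g * s g⁻¹) * (ρ₁ g * ρ₂ g⁻¹)) := by ring
    rw [h1, hsqrt, hs g hg.2]
  rw [Finset.sum_congr rfl hterm]
  have hext : ∑ g ∈ Finset.univ.filter (fun g : G => g ≠ 1),
      (Fintype.card G : ℂ)⁻¹ * ((χ₀ g - 2) * (ρ₁ g * ρ₂ g⁻¹))
      = ∑ g : G, (Fintype.card G : ℂ)⁻¹ * ((χ₀ g - 2) * (ρ₁ g * ρ₂ g⁻¹)) := by
    rw [Finset.sum_filter]
    refine Finset.sum_congr rfl fun g _ => ?_
    by_cases h : g = 1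
    · subst h
      simp [hχ1]
    · simp [h]
  rw [hext, hinner]
  have hpt : ∀ g ∈ (Finset.univ : Finset G),
      (χ₀ * ρ₁) g * starRingEnd ℂ (ρ₂ g) = χ₀ g * ρ₁ g * ρ₂ g⁻¹ := by
    intro g _
    rw [Pi.mul_apply, ← hrho2]
  rw [Finset.sum_congr rfl hpt, ← horth, ← Finset.mul_sum]
  have hsum : ∑ g : G, ((χ₀ g - 2) * (ρ₁ g * ρ₂ g⁻¹))
      = (∑ g : G, χ₀ g * ρ₁ g * ρ₂ g⁻¹) - 2 * ∑ g : G, ρ₁ g * ρ₂ g⁻¹ := by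
    rw [Finset.mul_sum, ← Finset.sum_sub_distrib]
    exact Finset.sum_congr rfl fun g _ => by ring
  rw [hsum]
  ring
end
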